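/- For t ∈ ℝ, let v(t) be the 5×5 complex matrix v(t) = [[i,0,0,0,0],[0,i,0,0,0],[0,0,-i,0,0],[0,0,0,-i,t],[0,0,0,-t,0]]. Then for every t ≠ 0, every real number c, and every invertible 5×5 complex matrix P, one has P·v(t)·P⁻¹ ≠ c·v(0). In other words, for t ≠ 0 the matrix v(t) is not similar to any real scalar multiple of v(0) = diag(i,i,-i,-i,0). -/
import Mathlib


open Matrix Complex

/-- For `t : ℝ`, let `v t = [[i,0,0,0,0],[0,i,0,0,0],[0,0,-i,0,0],[0,0,0,-i,t],[0,0,0,-t,0]]`.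
For every `t ≠ 0`, every real `c` and every invertible complex `5×5` matrix `P`, one
has `P * v t * P⁻¹ ≠ c • v 0`: the matrix `v t` is not similar to any real scalar
multiple of `v 0 = diag(i,i,-i,-i,0)`. -/
theorem su5_family_not_conjugate
    (v : ℝ → Matrix (Fin 5) (Fin 5) ℂ)
    (hv : ∀ t : ℝ, v t =
      !![I, 0, 0, 0, 0;
         0, I, 0, 0, 0;
         0, 0, -I, 0, 0;
         0, 0, 0, -I, (t : ℂ);
         0, 0, 0, -(t : ℂ), 0]) :
    ∀ t : ℝ, t ≠ 0 → ∀ c : ℝ, ∀ P : Matrix (Fin 5) (Fin 5) ℂ,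
      IsUnit P → P * v t * P⁻¹ ≠ c • v 0 := by
  intro t ht c P hP heq
  have hdet : ∀ s : ℝ, (v s).det = I * s ^ 2 := by
    intro s
    rw [hv]
    simp [Matrix.det_succ_row_zero, Fin.sum_univ_succ]
    have h3 : I ^ 3 = -I := by
      rw [pow_succ, pow_two, Complex.I_mul_I]; ring
    ring_nf
    rw [h3]; ring
  have hPd : P.det ≠ 0 := by
    have := (Matrix.isUnit_iff_isUnit_det P).mp hP
    exact this.ne_zero
  have h3 : (P * v t * P⁻¹).det = (v t).det := by
    rw [Matrix.det_mul, Matrix.det_mul, Matrix.det_nonsing_inv, Ring.inverse_eq_inv]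
    field_simp
  have h4 : ((c : ℂ) • v 0).det = 0 := by
    rw [Matrix.det_smul, hdet 0]
    simp
  have h5 : (c • v 0) = ((c : ℂ) • v 0) := by
    ext i j; simp
  rw [heq, h5, h4, hdet t] at h3
  have : (t : ℂ) ≠ 0 := by exact_mod_cast ht
  simp [I_ne_zero, this] at h3
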